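/- Let k be a field, (P, ⊥) a poset with an order-reversing involution, and φ a symplectically indecomposable symplectic representation of (P, ⊥) in a finite-dimensional symplectic space (V, ω) over k. If f is an endomorphism of the underlying linear representation of φ satisfying fᵗ = f or fᵗ = −f, then f is nilpotent or bijective. -/

import Mathlib

/-- (Symplectic Fitting lemma.)  Let `φ` be a symplectically
indecomposable symplectic representation of a poset with order-reversing involution
`(P, ⊥)` in a finite-dimensional symplectic space `(V, ω)` over a field `k`.  If `f` is
an endomorphism of the underlying linear representation satisfying `fᵗ = f` or
`fᵗ = −f`, then `f` is nilpotent or bijective.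

Here the symplectic orthogonal `A^⊥ = {v : ω(v, a) = 0 ∀ a ∈ A}` is
`(ω.flip).orthogonal A`, and transposes are expressed by the defining identity
`ω (f x) y = ω x (fᵗ y)`. -/
theorem symplectic_fitting_lemma
    {k V P : Type*} [Field k] [AddCommGroup V] [Module k V] [FiniteDimensional k V]
    [PartialOrder P]
    (invol : P → P) (hinv : Function.Involutive invol) (hanti : Antitone invol)
    (ω : LinearMap.BilinForm k V) (halt : LinearMap.IsAlt ω)
    (hnd : LinearMap.BilinForm.Nondegenerate ω)
    (φ : P → Submodule k V) (hmono : Monotone φ)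
    (hsymp : ∀ p, φ (invol p) = LinearMap.BilinForm.orthogonal ω.flip (φ p))
    (hindec : ∀ U' U'' : Submodule k V,
      U'' = LinearMap.BilinForm.orthogonal ω.flip U' → IsCompl U' U'' →
      (∀ p, φ p = (φ p ⊓ U') ⊔ (φ p ⊓ U'')) → U' = ⊥ ∨ U'' = ⊥)
    (f : V →ₗ[k] V) (hend : ∀ p, (φ p).map f ≤ φ p)
    (hself : (∀ x y : V, ω (f x) y = ω x (f y)) ∨ (∀ x y : V, ω (f x) y = - ω x (f y))) :
    IsNilpotent f ∨ Function.Bijective f := by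
  classical
  -- sign lemma : transfer of vanishing across `f`
  have hz : ∀ x y : V, ω x (f y) = 0 → ω (f x) y = 0 := by
    rcases hself with h | h
    · intro x y hxy; rw [h]; exact hxy
    · intro x y hxy; rw [h, hxy, neg_zero]
  have hzn : ∀ n : ℕ, ∀ x y : V, ω x ((f ^ n) y) = 0 → ω ((f ^ n) x) y = 0 := by
    intro n
    induction n with
    | zero => intro x y h; simpa using h
    | succ n ih =>
      intro x y h
      have h1 : ω (f x) ((f ^ n) y) = 0 := by
        apply hz
        have he : (f ^ (n + 1)) y = f ((f ^ n) y) := by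
          rw [pow_succ']; rfl
        rw [← he]; exact h
      have h2 : (f ^ (n + 1)) x = (f ^ n) (f x) := by rw [pow_succ]; rfl
      rw [h2]; exact ih (f x) y h1
  have hrefl : ω.IsRefl := halt.isRefl
  have hreflf : ω.flip.IsRefl := LinearMap.IsRefl.flip_isRefl_iff.mpr hrefl
  have hndf : ω.flip.Nondegenerate := by
    exact hnd.flip
  -- choose a uniform exponent N
  obtain ⟨m, hm⟩ := Filter.eventually_atTop.mp f.eventually_isCompl_ker_pow_range_pow
  set N : ℕ := max m (max (Module.finrank k V) 1) with hN
  have hNm : m ≤ N := le_max_left _ _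
  have hNfr : Module.finrank k V ≤ N := le_trans (le_max_left _ _) (le_max_right _ _)
  have hN1 : 1 ≤ N := le_trans (le_max_right _ _) (le_max_right _ _)
  set K : Submodule k V := LinearMap.ker (f ^ N) with hK
  set R : Submodule k V := LinearMap.range (f ^ N) with hR
  have hcompl : IsCompl K R := hm N hNm
  -- kernel stability
  have hker_stab : ∀ n, N ≤ n → LinearMap.ker (f ^ n) = K := by
    intro n hn
    rw [hK, Module.End.ker_pow_eq_ker_pow_finrank_of_le (le_trans hNfr hn),
      Module.End.ker_pow_eq_ker_pow_finrank_of_le hNfr]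
  -- the range is the orthogonal of the kernel
  have hle : R ≤ LinearMap.BilinForm.orthogonal ω.flip K := by
    rintro _ ⟨v, rfl⟩
    intro a ha
    show ω ((f ^ N) v) a = 0
    apply hzn
    rw [LinearMap.mem_ker.mp ha, map_zero]
  have hfr : Module.finrank k (LinearMap.BilinForm.orthogonal ω.flip K) ≤ Module.finrank k R := by
    rw [LinearMap.BilinForm.finrank_orthogonal hndf]
    have hrn := LinearMap.finrank_range_add_finrank_ker (f ^ N)
    rw [← hK, ← hR] at hrn
    omega
  have horth : R = LinearMap.BilinForm.orthogonal ω.flip K :=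
    Submodule.eq_of_le_of_finrank_le hle hfr
  -- each φ p decomposes
  have hdec : ∀ p, φ p = (φ p ⊓ K) ⊔ (φ p ⊓ R) := by
    intro p
    refine le_antisymm ?_ (sup_le inf_le_left inf_le_left)
    have hWf : ∀ x ∈ φ p, f x ∈ φ p := fun x hx => hend p ⟨x, hx, rfl⟩
    set g : (φ p) →ₗ[k] (φ p) := f.restrict hWf with hg
    obtain ⟨mp, hmp⟩ := Filter.eventually_atTop.mp g.eventually_isCompl_ker_pow_range_pow
    set n : ℕ := max N mp with hn
    have hNn : N ≤ n := le_max_left _ _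
    have hc := hmp n (le_max_right _ _)
    intro w hw
    have hmem : (⟨w, hw⟩ : φ p) ∈ LinearMap.ker (g ^ n) ⊔ LinearMap.range (g ^ n) := by
      rw [hc.codisjoint.eq_top]; trivial
    obtain ⟨a, ha, b, hb, hab⟩ := Submodule.mem_sup.mp hmem
    have hw' : w = (a : V) + (b : V) := by
      have := congrArg Subtype.val hab
      simpa using this.symm
    rw [hw']
    refine Submodule.add_mem _ (Submodule.mem_sup_left (Submodule.mem_inf.mpr ⟨a.2, ?_⟩))
      (Submodule.mem_sup_right (Submodule.mem_inf.mpr ⟨b.2, ?_⟩))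
    · -- (a : V) ∈ K
      have ha0 : (f ^ n) (a : V) = 0 := by
        have := LinearMap.mem_ker.mp ha
        rw [hg, Module.End.pow_restrict] at this
        have := congrArg Subtype.val this
        simpa [LinearMap.restrict_apply] using this
      have : (a : V) ∈ LinearMap.ker (f ^ n) := LinearMap.mem_ker.mpr ha0
      rwa [hker_stab n hNn] at this
    · -- (b : V) ∈ R
      obtain ⟨c, hc'⟩ := hb
      have hb1 : (b : V) = (f ^ n) (c : V) := by
        rw [hg, Module.End.pow_restrict] at hc'
        have := congrArg Subtype.val hc'
        simpa [LinearMap.restrict_apply] using this.symm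
      obtain ⟨d, hd⟩ : ∃ d, n = N + d := ⟨n - N, (Nat.add_sub_cancel' hNn).symm⟩
      refine ⟨(f ^ d) (c : V), ?_⟩
      rw [hb1, hd, pow_add, Module.End.mul_apply]
  rcases hindec K R horth hcompl hdec with h | h
  · -- kernel is trivial : f is bijective
    right
    have hinj : Function.Injective f := by
      rw [← LinearMap.ker_eq_bot]
      rw [← le_bot_iff]
      intro x hx
      have hfx : f x = 0 := LinearMap.mem_ker.mp hx
      have hxK : x ∈ K := by
        obtain ⟨d, hd⟩ : ∃ d, N = d + 1 := ⟨N - 1, (Nat.succ_pred_eq_of_pos hN1).symm⟩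
        show (f ^ N) x = 0
        rw [hd, pow_succ, Module.End.mul_apply, hfx, map_zero]
      rw [h] at hxK
      exact hxK
    exact ⟨hinj, LinearMap.injective_iff_surjective.mp hinj⟩
  · -- range is trivial : f is nilpotent
    left
    exact ⟨N, LinearMap.range_eq_bot.mp h⟩
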